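/- Let H be a separable Hilbert space, ω : ℝ≥0 → ℝ≥0 monotone increasing continuous with ω(0+) = 0, and let μₙ ∈ M(a,b;H) be a weakly-star convergent sequence with limit μ, such that |μₙ|([x,y]) ≤ ω(|x−y|) for all n and all x ≤ y in [a,b]. Then the limit measure μ is non-atomic, its distribution function satisfies ‖Φ_μ(x) − Φ_μ(y)‖_H ≤ ω(|x−y|), and for every ψ ∈ H the scalar functions t ↦ (Φ_{μₙ}(t), ψ) converge to t ↦ (Φ_μ(t), ψ) uniformly on [a,b]. -/

import Mathlib

open MeasureTheory Filter Topology
open scoped ENNReal NNReal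

/-- Total variation of an `H`-valued vector measure on a set `A`. -/
noncomputable def tvar {H : Type*} [NormedAddCommGroup H]
    (μ : VectorMeasure ℝ H) (A : Set ℝ) : ℝ≥0∞ :=
  ⨆ (P : ℕ → Set ℝ) (_ : ∀ n, MeasurableSet (P n))
    (_ : ∀ m n, m ≠ n → Disjoint (P m) (P n)) (_ : ∀ n, P n ⊆ A),
      ∑' n, (‖μ (P n)‖₊ : ℝ≥0∞)

/-- Lebesgue integral of `g` against a finite signed measure, via the Jordan decomposition. -/
noncomputable def sintegral (s : SignedMeasure ℝ) (g : ℝ → ℝ) : ℝ :=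
  (∫ t, g t ∂s.toJordanDecomposition.posPart) - ∫ t, g t ∂s.toJordanDecomposition.negPart

/-- The scalar signed measure `A ↦ ⟪ψ, μ(A)⟫` associated with a vector measure `μ`. -/
noncomputable def scalarComp {H : Type*} [NormedAddCommGroup H] [InnerProductSpace ℝ H]
    (μ : VectorMeasure ℝ H) (ψ : H) : SignedMeasure ℝ :=
  μ.mapRange (innerSL ℝ ψ).toLinearMap.toAddMonoidHom (innerSL ℝ ψ).continuous

/-- The pairing `∫ (f(t), μ(dt))_H` of an `H`-valued function with an `H`-valued vector
measure, computed through an orthonormal Hilbert basis `b` of `H`. -/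
noncomputable def vpair {H : Type*} [NormedAddCommGroup H] [InnerProductSpace ℝ H]
    (b : HilbertBasis ℕ ℝ H) (μ : VectorMeasure ℝ H) (f : ℝ → H) : ℝ :=
  ∑' i, sintegral (scalarComp μ (b i)) fun t => (inner ℝ (f t) (b i) : ℝ)

section AuxTvar

set_option linter.unusedSectionVars false

variable {H : Type*} [NormedAddCommGroup H] [InnerProductSpace ℝ H]

lemma tvar_mono (μ : VectorMeasure ℝ H) {A B : Set ℝ} (h : A ⊆ B) :
    tvar μ A ≤ tvar μ B := by
  refine iSup_le fun P => iSup_le fun hP => iSup_le fun hd => iSup_le fun hsub => ?_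
  exact le_iSup_of_le P (le_iSup_of_le hP (le_iSup_of_le hd
    (le_iSup_of_le (fun n => (hsub n).trans h) le_rfl)))

lemma tvar_eq_zero' (μ : VectorMeasure ℝ H) {A : Set ℝ}
    (h : ∀ B, B ⊆ A → MeasurableSet B → μ B = 0) : tvar μ A = 0 := by
  refine le_antisymm ?_ zero_le
  refine iSup_le fun P => iSup_le fun hP => iSup_le fun _ => iSup_le fun hsub => ?_
  have : ∀ n, (‖μ (P n)‖₊ : ℝ≥0∞) = 0 := by
    intro n; rw [h (P n) (hsub n) (hP n)]; simp
  simp [this]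

lemma le_tvar_of (μ : VectorMeasure ℝ H) {A : Set ℝ} (P : ℕ → Set ℝ)
    (hm : ∀ n, MeasurableSet (P n)) (hd : ∀ m n, m ≠ n → Disjoint (P m) (P n))
    (hs : ∀ n, P n ⊆ A) : ∑' n, (‖μ (P n)‖₊ : ℝ≥0∞) ≤ tvar μ A :=
  le_iSup_of_le P (le_iSup_of_le hm (le_iSup_of_le hd (le_iSup_of_le hs le_rfl)))

lemma pair_le_tvar (μ : VectorMeasure ℝ H) {A B C : Set ℝ} (hB : MeasurableSet B)
    (hC : MeasurableSet C) (hBC : Disjoint B C) (hBA : B ⊆ A) (hCA : C ⊆ A) :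
    (‖μ B‖₊ : ℝ≥0∞) + (‖μ C‖₊ : ℝ≥0∞) ≤ tvar μ A := by
  classical
  set P : ℕ → Set ℝ := fun k => if k = 0 then B else if k = 1 then C else ∅ with hPdef
  have hPm : ∀ n, MeasurableSet (P n) := by
    intro n; simp only [hPdef]; split_ifs <;> simp [hB, hC]
  have hPd : ∀ m n, m ≠ n → Disjoint (P m) (P n) := by
    intro m n hmn; simp only [hPdef]
    split_ifs <;> first | (exfalso; omega) | exact hBC | exact hBC.symm | simp
  have hPs : ∀ n, P n ⊆ A := by
    intro n; simp only [hPdef]; split_ifs <;> simp [hBA, hCA]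
  refine le_trans ?_ (le_tvar_of μ P hPm hPd hPs)
  have h2 : ∑ k ∈ Finset.range 2, (‖μ (P k)‖₊ : ℝ≥0∞) ≤ ∑' n, (‖μ (P n)‖₊ : ℝ≥0∞) :=
    ENNReal.sum_le_tsum _
  simpa [hPdef, Finset.sum_range_succ] using h2

lemma nnnorm_le_tvar (μ : VectorMeasure ℝ H) {A B : Set ℝ} (hB : MeasurableSet B)
    (hBA : B ⊆ A) : (‖μ B‖₊ : ℝ≥0∞) ≤ tvar μ A := by
  have := pair_le_tvar μ hB MeasurableSet.empty (by simp) hBA (Set.empty_subset A)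
  simpa using this

lemma scalarComp_apply (μ : VectorMeasure ℝ H) (ψ : H) (A : Set ℝ) :
    scalarComp μ ψ A = (inner ℝ ψ (μ A) : ℝ) :=
  VectorMeasure.mapRange_apply μ (innerSL ℝ ψ).continuous

lemma signed_apply_jordan (s : SignedMeasure ℝ) {A : Set ℝ} (hA : MeasurableSet A) :
    s A = (s.toJordanDecomposition.posPart A).toReal -
      (s.toJordanDecomposition.negPart A).toReal := by
  conv_lhs => rw [← s.toSignedMeasure_toJordanDecomposition]
  rw [JordanDecomposition.toSignedMeasure]
  rw [VectorMeasure.sub_apply, Measure.toSignedMeasure_apply_measurable hA,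
    Measure.toSignedMeasure_apply_measurable hA]
  rfl

lemma posneg_le (μ : VectorMeasure ℝ H) (ψ : H) {A : Set ℝ} (hA : MeasurableSet A) :
    (scalarComp μ ψ).toJordanDecomposition.posPart A
      + (scalarComp μ ψ).toJordanDecomposition.negPart A
      ≤ (‖ψ‖₊ : ℝ≥0∞) * tvar μ A := by
  set s := scalarComp μ ψ with hs
  obtain ⟨i, hi₁, hi₂, hi₃, hpos, hneg⟩ := s.toJordanDecomposition_spec
  rw [hpos, hneg, SignedMeasure.toMeasureOfZeroLE_apply _ hi₂ hi₁ hA,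
    SignedMeasure.toMeasureOfLEZero_apply _ hi₃ hi₁.compl hA]
  have hb : ∀ B : Set ℝ, |s B| ≤ ‖ψ‖ * ‖μ B‖ := by
    intro B; rw [hs, scalarComp_apply]
    exact abs_real_inner_le_norm ψ (μ B)
  refine le_trans (add_le_add (ENNReal.coe_le_coe.2 (?_ : _ ≤ ‖ψ‖₊ * ‖μ (i ∩ A)‖₊))
      (ENNReal.coe_le_coe.2 (?_ : _ ≤ ‖ψ‖₊ * ‖μ (iᶜ ∩ A)‖₊))) ?_
  · rw [← NNReal.coe_le_coe]; push_cast; exact le_trans (le_abs_self _) (hb _)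
  · rw [← NNReal.coe_le_coe]; push_cast; exact le_trans (neg_le_abs _) (hb _)
  · calc ((‖ψ‖₊ * ‖μ (i ∩ A)‖₊ : ℝ≥0) : ℝ≥0∞) + ((‖ψ‖₊ * ‖μ (iᶜ ∩ A)‖₊ : ℝ≥0) : ℝ≥0∞)
        = (‖ψ‖₊ : ℝ≥0∞) * ((‖μ (i ∩ A)‖₊ : ℝ≥0∞) + (‖μ (iᶜ ∩ A)‖₊ : ℝ≥0∞)) := by
          push_cast; ring
      _ ≤ (‖ψ‖₊ : ℝ≥0∞) * tvar μ A := by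
          refine mul_le_mul_right ?_ _
          exact pair_le_tvar μ (hi₁.inter hA) (hi₁.compl.inter hA)
            ((disjoint_compl_right.mono Set.inter_subset_left Set.inter_subset_left))
            Set.inter_subset_right Set.inter_subset_right

lemma integrable_of_bound (ν : Measure ℝ) [IsFiniteMeasure ν] {φ : ℝ → ℝ}
    (hc : Continuous φ) (hb : ∀ t, |φ t| ≤ 1) : Integrable φ ν :=
  (integrable_const (1 : ℝ)).mono' hc.aestronglyMeasurable
    (Filter.Eventually.of_forall (by simpa using hb))

lemma sintegral_eq (s : SignedMeasure ℝ) (ν₁ ν₂ : Measure ℝ) [IsFiniteMeasure ν₁]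
    [IsFiniteMeasure ν₂]
    (h : ∀ A : Set ℝ, MeasurableSet A → s A = (ν₁ A).toReal - (ν₂ A).toReal)
    {φ : ℝ → ℝ} (hφc : Continuous φ) (hφb : ∀ t, |φ t| ≤ 1) :
    sintegral s φ = (∫ t, φ t ∂ν₁) - ∫ t, φ t ∂ν₂ := by
  set p := s.toJordanDecomposition.posPart with hp
  set q := s.toJordanDecomposition.negPart with hq
  have key : p + ν₂ = ν₁ + q := by
    refine Measure.ext fun A hA => ?_
    have h1 := h A hA
    have h2 := signed_apply_jordan s hA
    rw [← hp, ← hq] at h2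
    have e1 : (p A).toReal + (ν₂ A).toReal = (ν₁ A).toReal + (q A).toReal := by
      rw [h1] at h2; linarith
    rw [Measure.add_apply, Measure.add_apply,
      ← ENNReal.toReal_add (measure_ne_top p A) (measure_ne_top ν₂ A),
      ← ENNReal.toReal_add (measure_ne_top ν₁ A) (measure_ne_top q A)] at *
    exact (ENNReal.toReal_eq_toReal_iff' (by finiteness) (by finiteness)).1 e1
  have hint : ∀ (ν : Measure ℝ), IsFiniteMeasure ν → Integrable φ ν := fun ν hν =>
    integrable_of_bound ν hφc hφb
  have e2 : (∫ t, φ t ∂p) + ∫ t, φ t ∂ν₂ = (∫ t, φ t ∂ν₁) + ∫ t, φ t ∂q := by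
    rw [← integral_add_measure (hint p inferInstance) (hint ν₂ inferInstance),
      ← integral_add_measure (hint ν₁ inferInstance) (hint q inferInstance), key]
  rw [sintegral, ← hp, ← hq]; linarith

lemma sintegral_add (s t : SignedMeasure ℝ) {φ : ℝ → ℝ} (hφc : Continuous φ)
    (hφb : ∀ u, |φ u| ≤ 1) :
    sintegral (s + t) φ = sintegral s φ + sintegral t φ := by
  rw [sintegral_eq (s + t) (s.toJordanDecomposition.posPart + t.toJordanDecomposition.posPart)
    (s.toJordanDecomposition.negPart + t.toJordanDecomposition.negPart) ?_ hφc hφb]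
  · rw [integral_add_measure (integrable_of_bound _ hφc hφb) (integrable_of_bound _ hφc hφb),
      integral_add_measure (integrable_of_bound _ hφc hφb) (integrable_of_bound _ hφc hφb),
      sintegral, sintegral]
    ring
  · intro A hA
    rw [VectorMeasure.add_apply, signed_apply_jordan s hA, signed_apply_jordan t hA,
      Measure.add_apply, Measure.add_apply,
      ENNReal.toReal_add (by finiteness) (by finiteness),
      ENNReal.toReal_add (by finiteness) (by finiteness)]
    ring

lemma sintegral_smul (c : ℝ) (s : SignedMeasure ℝ) {φ : ℝ → ℝ} (hφc : Continuous φ)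
    (hφb : ∀ u, |φ u| ≤ 1) :
    sintegral (c • s) φ = c * sintegral s φ := by
  rcases le_or_gt 0 c with hc | hc
  · rw [sintegral_eq (c • s) (c.toNNReal • s.toJordanDecomposition.posPart)
      (c.toNNReal • s.toJordanDecomposition.negPart) ?_ hφc hφb]
    · rw [integral_smul_nnreal_measure, integral_smul_nnreal_measure, sintegral]
      simp [NNReal.smul_def, Real.coe_toNNReal c hc]
      ring
    · intro A hA
      rw [VectorMeasure.smul_apply, signed_apply_jordan s hA]
      simp only [Measure.smul_apply, ENNReal.smul_def, smul_eq_mul, ENNReal.toReal_mul, ENNReal.coe_toReal, Real.coe_toNNReal c hc]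
      ring
  · rw [sintegral_eq (c • s) ((-c).toNNReal • s.toJordanDecomposition.negPart)
      ((-c).toNNReal • s.toJordanDecomposition.posPart) ?_ hφc hφb]
    · rw [integral_smul_nnreal_measure, integral_smul_nnreal_measure, sintegral]
      simp [NNReal.smul_def, Real.coe_toNNReal (-c) (by linarith)]
      ring
    · intro A hA
      rw [VectorMeasure.smul_apply, signed_apply_jordan s hA]
      simp only [Measure.smul_apply, ENNReal.smul_def, smul_eq_mul, ENNReal.toReal_mul, ENNReal.coe_toReal,
        Real.coe_toNNReal (-c) (by linarith : (0:ℝ) ≤ -c)]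
      ring

lemma sintegral_const_mul (c : ℝ) (s : SignedMeasure ℝ) (φ : ℝ → ℝ) :
    sintegral s (fun t => c * φ t) = c * sintegral s φ := by
  simp only [sintegral, integral_const_mul]; ring

lemma sintegral_zero (φ : ℝ → ℝ) (hφc : Continuous φ) (hφb : ∀ u, |φ u| ≤ 1) :
    sintegral (0 : SignedMeasure ℝ) φ = 0 := by
  rw [sintegral_eq 0 0 0 (by simp) hφc hφb]; simp

/-- error estimate: if `φ` agrees with the indicator of `I` except on `K`, then
`sintegral s φ` is close to `s I`. -/
lemma sintegral_est (s : SignedMeasure ℝ) {φ : ℝ → ℝ} (hφc : Continuous φ)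
    (hφb : ∀ t, |φ t| ≤ 1) {I K : Set ℝ} (hI : MeasurableSet I) (hK : MeasurableSet K)
    (hb : ∀ t, |φ t - I.indicator (fun _ => (1:ℝ)) t| ≤ K.indicator (fun _ => (1:ℝ)) t) :
    |sintegral s φ - s I| ≤ (s.toJordanDecomposition.posPart K).toReal
      + (s.toJordanDecomposition.negPart K).toReal := by
  set p := s.toJordanDecomposition.posPart with hp
  set q := s.toJordanDecomposition.negPart with hq
  have key : ∀ (ν : Measure ℝ) (_ : IsFiniteMeasure ν),
      |(∫ t, φ t ∂ν) - (ν I).toReal| ≤ (ν K).toReal := by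
    intro ν hν
    have hind : Integrable (I.indicator (fun _ => (1:ℝ))) ν :=
      (integrable_const (1:ℝ)).indicator hI
    have hφi : Integrable φ ν := integrable_of_bound ν hφc hφb
    have e1 : (∫ t, φ t ∂ν) - (ν I).toReal
        = ∫ t, (φ t - I.indicator (fun _ => (1:ℝ)) t) ∂ν := by
      rw [integral_sub hφi hind, integral_indicator_const _ hI]; simp [Measure.real]
    rw [e1]
    calc |∫ t, (φ t - I.indicator (fun _ => (1:ℝ)) t) ∂ν|
        ≤ ∫ t, |φ t - I.indicator (fun _ => (1:ℝ)) t| ∂ν := by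
          simpa [Real.norm_eq_abs] using norm_integral_le_integral_norm (μ := ν)
            (fun t => φ t - I.indicator (fun _ => (1:ℝ)) t)
      _ ≤ ∫ t, K.indicator (fun _ => (1:ℝ)) t ∂ν := by
          exact integral_mono (hφi.sub hind).abs ((integrable_const (1:ℝ)).indicator hK) hb
      _ = (ν K).toReal := by rw [integral_indicator_const _ hK]; simp [Measure.real]
  have h1 := key p inferInstance
  have h2 := key q inferInstance
  have hsI := signed_apply_jordan s hI
  rw [← hp, ← hq] at hsI
  rw [sintegral, ← hp, ← hq, hsI]
  have e3 : (∫ t, φ t ∂p) - ∫ t, φ t ∂q - ((p I).toReal - (q I).toReal)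
      = ((∫ t, φ t ∂p) - (p I).toReal) - ((∫ t, φ t ∂q) - (q I).toReal) := by ring
  rw [e3]
  calc |((∫ t, φ t ∂p) - (p I).toReal) - ((∫ t, φ t ∂q) - (q I).toReal)|
      ≤ |(∫ t, φ t ∂p) - (p I).toReal| + |(∫ t, φ t ∂q) - (q I).toReal| := abs_sub _ _
    _ ≤ (p K).toReal + (q K).toReal := add_le_add h1 h2

lemma TV_le_add (s : SignedMeasure ℝ) {K K1 K2 : Set ℝ} (h : K ⊆ K1 ∪ K2) :
    (s.toJordanDecomposition.posPart K).toReal + (s.toJordanDecomposition.negPart K).toReal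
    ≤ ((s.toJordanDecomposition.posPart K1).toReal
        + (s.toJordanDecomposition.negPart K1).toReal)
      + ((s.toJordanDecomposition.posPart K2).toReal
        + (s.toJordanDecomposition.negPart K2).toReal) := by
  set p := s.toJordanDecomposition.posPart
  set q := s.toJordanDecomposition.negPart
  have hp1 : (p K).toReal ≤ (p K1).toReal + (p K2).toReal := by
    rw [← ENNReal.toReal_add (measure_ne_top _ _) (measure_ne_top _ _)]
    exact ENNReal.toReal_mono (by finiteness)
      (le_trans (measure_mono h) (measure_union_le _ _))
  have hq1 : (q K).toReal ≤ (q K1).toReal + (q K2).toReal := by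
    rw [← ENNReal.toReal_add (measure_ne_top _ _) (measure_ne_top _ _)]
    exact ENNReal.toReal_mono (by finiteness)
      (le_trans (measure_mono h) (measure_union_le _ _))
  linarith

/-- continuity from above for the symmetric enlargement of an interval -/
lemma small_err (ν : Measure ℝ) [IsFiniteMeasure ν] (x y : ℝ) (hxy : x ≤ y) {ε : ℝ}
    (hε : 0 < ε) :
    ∃ δ : ℝ, 0 < δ ∧ (ν (Set.Icc (x - δ) (y + δ) \ Set.Icc x y)).toReal < ε := by
  set F : ℕ → Set ℝ := fun k => Set.Icc (x - 1/(k+1)) (y + 1/(k+1)) \ Set.Icc x y with hF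
  have hmeas : ∀ k, NullMeasurableSet (F k) ν := fun k =>
    ((measurableSet_Icc.diff measurableSet_Icc)).nullMeasurableSet
  have hanti : Antitone F := by
    intro k l hkl
    have h1 : (1:ℝ)/(l+1) ≤ 1/(k+1) := by
      apply one_div_le_one_div_of_le (by positivity)
      exact_mod_cast by omega
    exact Set.diff_subset_diff_left (Set.Icc_subset_Icc (by linarith) (by linarith))
  have hempty : ⋂ k, F k = ∅ := by
    ext t
    simp only [Set.mem_iInter, Set.mem_empty_iff_false, iff_false]
    intro hmem
    obtain ⟨hIcc, hnot⟩ := hmem 0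
    have ht : t < x ∨ y < t := by
      by_contra hcon
      push_neg at hcon
      exact hnot ⟨hcon.1, hcon.2⟩
    rcases ht with ht | ht
    · obtain ⟨k, hk⟩ := exists_nat_one_div_lt (show 0 < x - t by linarith)
      obtain ⟨h1, -⟩ := (hmem k).1
      linarith [hk]
    · obtain ⟨k, hk⟩ := exists_nat_one_div_lt (show 0 < t - y by linarith)
      obtain ⟨-, h2⟩ := (hmem k).1
      linarith [hk]
  have htend : Tendsto (fun k => ν (F k)) atTop (𝓝 0) := by
    have := tendsto_measure_iInter_atTop (μ := ν) hmeas hanti ⟨0, measure_ne_top _ _⟩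
    rwa [hempty, measure_empty] at this
  have hev : ∀ᶠ k in atTop, ν (F k) < ENNReal.ofReal ε :=
    htend.eventually_lt_const (by simpa using hε)
  obtain ⟨k, hk⟩ := hev.exists
  exact ⟨1/(k+1), by positivity, ENNReal.toReal_lt_of_lt_ofReal hk⟩

lemma scalarComp_add (μ : VectorMeasure ℝ H) (ψ₁ ψ₂ : H) :
    scalarComp μ (ψ₁ + ψ₂) = scalarComp μ ψ₁ + scalarComp μ ψ₂ :=
  VectorMeasure.ext fun A _ => by
    simp [scalarComp_apply, VectorMeasure.add_apply, inner_add_left]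

lemma scalarComp_smul (μ : VectorMeasure ℝ H) (c : ℝ) (ψ : H) :
    scalarComp μ (c • ψ) = c • scalarComp μ ψ :=
  VectorMeasure.ext fun A _ => by
    simp [scalarComp_apply, VectorMeasure.smul_apply, real_inner_smul_left]

lemma scalarComp_zero (μ : VectorMeasure ℝ H) : scalarComp μ (0 : H) = 0 :=
  VectorMeasure.ext fun A _ => by
    simp [scalarComp_apply, VectorMeasure.zero_apply]

lemma hasSum_sintegral (bH : HilbertBasis ℕ ℝ H) (ν : VectorMeasure ℝ H)
    {φ : ℝ → ℝ} (hφc : Continuous φ) (hφb : ∀ u, |φ u| ≤ 1) {ψ : H}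
    (hψ : ψ ∈ Submodule.span ℝ (Set.range bH)) :
    HasSum (fun i => (inner ℝ ψ (bH i) : ℝ) * sintegral (scalarComp ν (bH i)) φ)
      (sintegral (scalarComp ν ψ) φ) := by
  induction hψ using Submodule.span_induction with
  | mem x hx =>
      obtain ⟨j, rfl⟩ := hx
      have horth := orthonormal_iff_ite.mp bH.orthonormal
      show HasSum (fun i => (inner ℝ (bH j) (bH i) : ℝ) * sintegral (scalarComp ν (bH i)) φ) _
      have hfun : (fun i => (inner ℝ (bH j) (bH i) : ℝ) * sintegral (scalarComp ν (bH i)) φ)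
          = fun i => if i = j then sintegral (scalarComp ν (bH j)) φ else 0 := by
        funext i
        rcases eq_or_ne i j with rfl | hij
        · rw [if_pos rfl, horth i i, if_pos rfl, one_mul]
        · rw [if_neg hij, horth j i, if_neg (Ne.symm hij), zero_mul]
      rw [hfun]
      exact hasSum_ite_eq j _
  | zero =>
      rw [scalarComp_zero, sintegral_zero φ hφc hφb]
      simpa [inner_zero_left] using (hasSum_zero : HasSum (fun _ : ℕ => (0:ℝ)) 0)
  | add x y hx hy ihx ihy =>
      rw [scalarComp_add, sintegral_add _ _ hφc hφb]
      simpa [inner_add_left, add_mul] using ihx.add ihy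
  | smul c x hx ih =>
      rw [scalarComp_smul, sintegral_smul c _ hφc hφb]
      simpa [real_inner_smul_left, mul_assoc] using ih.mul_left c

lemma vpair_eq (bH : HilbertBasis ℕ ℝ H) (ν : VectorMeasure ℝ H)
    {φ : ℝ → ℝ} (hφc : Continuous φ) (hφb : ∀ u, |φ u| ≤ 1) {ψ : H}
    (hψ : ψ ∈ Submodule.span ℝ (Set.range bH)) :
    vpair bH ν (fun t => φ t • ψ) = sintegral (scalarComp ν ψ) φ := by
  have h1 : ∀ i, (fun t => (inner ℝ (φ t • ψ) (bH i) : ℝ))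
      = fun t => (inner ℝ ψ (bH i) : ℝ) * φ t := by
    intro i; funext t; rw [real_inner_smul_left]; ring
  rw [vpair]
  have h2 : ∀ i, sintegral (scalarComp ν (bH i)) (fun t => (inner ℝ (φ t • ψ) (bH i) : ℝ))
      = (inner ℝ ψ (bH i) : ℝ) * sintegral (scalarComp ν (bH i)) φ := by
    intro i; rw [h1 i, sintegral_const_mul]
  calc (∑' i, sintegral (scalarComp ν (bH i)) fun t => (inner ℝ (φ t • ψ) (bH i) : ℝ))
      = ∑' i, (inner ℝ ψ (bH i) : ℝ) * sintegral (scalarComp ν (bH i)) φ := by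
        exact tsum_congr h2
    _ = sintegral (scalarComp ν ψ) φ := (hasSum_sintegral bH ν hφc hφb hψ).tsum_eq

noncomputable def tent (p q δ : ℝ) : ℝ → ℝ := fun t =>
  max 0 (min 1 (min ((t - p)/δ + 1) ((q - t)/δ + 1)))

lemma tent_continuous (p q δ : ℝ) : Continuous (tent p q δ) := by
  unfold tent; fun_prop

lemma tent_nonneg (p q δ t : ℝ) : 0 ≤ tent p q δ t := le_max_left _ _

lemma tent_le_one (p q δ t : ℝ) : tent p q δ t ≤ 1 :=
  max_le zero_le_one (min_le_left _ _)

lemma tent_abs_le (p q δ : ℝ) : ∀ t, |tent p q δ t| ≤ 1 := fun t =>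
  abs_le.2 ⟨by linarith [tent_nonneg p q δ t], tent_le_one p q δ t⟩

lemma tent_eq_one {p q δ t : ℝ} (hδ : 0 < δ) (hp : p ≤ t) (hq : t ≤ q) :
    tent p q δ t = 1 := by
  have h1 : (1:ℝ) ≤ (t - p)/δ + 1 := by
    have : 0 ≤ (t - p)/δ := div_nonneg (by linarith) hδ.le
    linarith
  have h2 : (1:ℝ) ≤ (q - t)/δ + 1 := by
    have : 0 ≤ (q - t)/δ := div_nonneg (by linarith) hδ.le
    linarith
  rw [tent]
  rw [min_eq_left (le_min h1 h2)]
  simp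

lemma tent_eq_zero {p q δ t : ℝ} (hδ : 0 < δ) (h : t ≤ p - δ ∨ q + δ ≤ t) :
    tent p q δ t = 0 := by
  have hmin : min ((t - p)/δ + 1) ((q - t)/δ + 1) ≤ 0 := by
    rcases h with h | h
    · refine le_trans (min_le_left _ _) ?_
      have : (t - p)/δ ≤ -1 := by
        rw [div_le_iff₀ hδ]; linarith
      linarith
    · refine le_trans (min_le_right _ _) ?_
      have : (q - t)/δ ≤ -1 := by
        rw [div_le_iff₀ hδ]; linarith
      linarith
  rw [tent, max_eq_left]
  exact le_trans (min_le_right _ _) hmin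

lemma tent_ind_bound {p q δ : ℝ} (hδ : 0 < δ) :
    ∀ t, |tent p q δ t - (Set.Icc p q).indicator (fun _ => (1:ℝ)) t|
      ≤ (Set.Icc (p-δ) (q+δ) \ Set.Icc p q).indicator (fun _ => (1:ℝ)) t := by
  intro t
  by_cases h1 : t ∈ Set.Icc p q
  · rw [Set.indicator_of_mem h1, tent_eq_one hδ h1.1 h1.2]
    simpa using Set.indicator_nonneg (fun _ _ => zero_le_one) t
  · rw [Set.indicator_of_notMem h1]
    by_cases h2 : t ∈ Set.Icc (p-δ) (q+δ)
    · rw [Set.indicator_of_mem (Set.mem_diff_of_mem h2 h1), sub_zero]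
      exact tent_abs_le _ _ _ _
    · rw [Set.indicator_of_notMem (fun hc => h2 hc.1), sub_zero]
      have hnot : t < p - δ ∨ q + δ < t := by
        by_contra hcon
        push_neg at hcon
        exact h2 ⟨hcon.1, hcon.2⟩
      rw [tent_eq_zero hδ (hnot.imp le_of_lt le_of_lt)]
      simp

lemma tent_ind_bound0 {p q δ : ℝ} (hδ : 0 < δ) :
    ∀ t, |tent p q δ t - (∅ : Set ℝ).indicator (fun _ => (1:ℝ)) t|
      ≤ (Set.Icc (p-δ) (q+δ)).indicator (fun _ => (1:ℝ)) t := by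
  intro t
  simp only [Set.indicator_empty, Pi.zero_apply, sub_zero]
  by_cases h2 : t ∈ Set.Icc (p-δ) (q+δ)
  · rw [Set.indicator_of_mem h2]; exact tent_abs_le _ _ _ _
  · rw [Set.indicator_of_notMem h2]
    have hnot : t < p - δ ∨ q + δ < t := by
      by_contra hcon
      push_neg at hcon
      exact h2 ⟨hcon.1, hcon.2⟩
    rw [tent_eq_zero hδ (hnot.imp le_of_lt le_of_lt)]
    simp

end AuxTvar

set_option maxHeartbeats 2000000 in
theorem uniformly_nonatomic_weak_star_limit
    {H : Type*} [NormedAddCommGroup H] [InnerProductSpace ℝ H] [CompleteSpace H]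
    (bH : HilbertBasis ℕ ℝ H) (a b : ℝ) (hab : a ≤ b)
    (ω : NNReal → NNReal) (hωm : Monotone ω) (hωc : Continuous ω) (hω0 : ω 0 = 0)
    (μn : ℕ → VectorMeasure ℝ H) (μ : VectorMeasure ℝ H)
    (hfinμ : tvar μ Set.univ ≠ ⊤)
    (hsupp : ∀ n, ∀ A : Set ℝ, MeasurableSet A → A ∩ Set.Icc a b = ∅ → μn n A = 0)
    (hsuppμ : ∀ A : Set ℝ, MeasurableSet A → A ∩ Set.Icc a b = ∅ → μ A = 0)
    (hna : ∀ n, ∀ x ∈ Set.Icc a b, ∀ y ∈ Set.Icc a b, x ≤ y →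
      tvar (μn n) (Set.Icc x y) ≤ (ω (Real.toNNReal (y - x)) : ℝ≥0∞))
    (hconv : ∀ f : ℝ → H, Continuous f →
      Tendsto (fun n => vpair bH (μn n) f) atTop (𝓝 (vpair bH μ f))) :
    (∀ t : ℝ, μ {t} = 0) ∧
    (∀ x ∈ Set.Icc a b, ∀ y ∈ Set.Icc a b, x ≤ y →
      ‖μ (Set.Ico a y) - μ (Set.Ico a x)‖₊ ≤ ω (Real.toNNReal (y - x))) ∧
    (∀ ψ : H, TendstoUniformlyOn
        (fun n t => (inner ℝ (μn n (Set.Ico a t)) ψ : ℝ))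
        (fun t => (inner ℝ (μ (Set.Ico a t)) ψ : ℝ)) atTop (Set.Icc a b)) := by
  classical
  -- variation bound for μn on sets inside [u,v]
  have htvarn : ∀ n (u v : ℝ), tvar (μn n) (Set.Icc u v ∩ Set.Icc a b)
      ≤ (ω ((v - u).toNNReal) : ℝ≥0∞) := by
    intro n u v
    rcases le_or_gt (u ⊔ a) (v ⊓ b) with h | h
    · have hxmem : u ⊔ a ∈ Set.Icc a b := ⟨le_sup_right, le_trans h (min_le_right _ _)⟩
      have hymem : v ⊓ b ∈ Set.Icc a b := ⟨le_trans le_sup_right h, min_le_right _ _⟩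
      have h1 := hna n _ hxmem _ hymem h
      rw [Set.Icc_inter_Icc]
      refine le_trans h1 (ENNReal.coe_le_coe.2 (hωm (Real.toNNReal_le_toNNReal ?_)))
      have h2 : u ≤ u ⊔ a := le_sup_left
      have h3 : v ⊓ b ≤ v := min_le_left _ _
      linarith
    · rw [Set.Icc_inter_Icc, Set.Icc_eq_empty (not_le.2 h)]
      rw [tvar_eq_zero' _ (fun B hB _ => by
        rw [Set.subset_empty_iff.1 hB]; exact (μn n).empty)]
      exact zero_le
  have hTVn : ∀ n (ψ : H) (u v : ℝ) (A : Set ℝ), MeasurableSet A → A ⊆ Set.Icc u v →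
      ((scalarComp (μn n) ψ).toJordanDecomposition.posPart A).toReal
      + ((scalarComp (μn n) ψ).toJordanDecomposition.negPart A).toReal
      ≤ ‖ψ‖ * (ω ((v - u).toNNReal) : ℝ) := by
    intro n ψ u v A hA hAsub
    set s := scalarComp (μn n) ψ with hsdef
    set I := Set.Icc a b with hIdef
    have hI : MeasurableSet I := measurableSet_Icc
    set p := s.toJordanDecomposition.posPart with hpdef
    set q := s.toJordanDecomposition.negPart with hqdef
    have h1 : p A + q A ≤ (‖ψ‖₊ : ℝ≥0∞) * (ω ((v - u).toNNReal) : ℝ≥0∞) := by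
      have e1 : ∀ m : Measure ℝ, m (A ∩ I) + m (A \ I) = m A := fun m =>
        measure_inter_add_diff A hI
      rw [← e1 p, ← e1 q]
      have h2 := posneg_le (μn n) ψ (hA.inter hI)
      have h3 := posneg_le (μn n) ψ (hA.diff hI)
      have h4 : tvar (μn n) (A ∩ I) ≤ (ω ((v - u).toNNReal) : ℝ≥0∞) :=
        le_trans (tvar_mono _ (Set.inter_subset_inter hAsub subset_rfl)) (htvarn n u v)
      have h5 : tvar (μn n) (A \ I) = 0 := tvar_eq_zero' _ (fun B hBsub hBm =>
        hsupp n B hBm (by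
          apply Set.eq_empty_of_subset_empty
          intro z hz
          exact absurd hz.2 (hBsub hz.1).2))
      calc p (A ∩ I) + p (A \ I) + (q (A ∩ I) + q (A \ I))
          = (p (A ∩ I) + q (A ∩ I)) + (p (A \ I) + q (A \ I)) := by ring
        _ ≤ (‖ψ‖₊ : ℝ≥0∞) * tvar (μn n) (A ∩ I)
            + (‖ψ‖₊ : ℝ≥0∞) * tvar (μn n) (A \ I) := add_le_add h2 h3
        _ ≤ (‖ψ‖₊ : ℝ≥0∞) * (ω ((v - u).toNNReal) : ℝ≥0∞) + (‖ψ‖₊ : ℝ≥0∞) * 0 :=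
            add_le_add (mul_le_mul_right h4 _) (mul_le_mul_right h5.le _)
        _ = (‖ψ‖₊ : ℝ≥0∞) * (ω ((v - u).toNNReal) : ℝ≥0∞) := by rw [mul_zero, add_zero]
    have h6 := ENNReal.toReal_mono (by finiteness) h1
    rw [ENNReal.toReal_add (measure_ne_top _ _) (measure_ne_top _ _),
      ENNReal.toReal_mul, ENNReal.coe_toReal, ENNReal.coe_toReal, coe_nnnorm] at h6
    exact h6
  have hlim : ∀ ψ, ψ ∈ Submodule.span ℝ (Set.range ⇑bH) → ∀ φ : ℝ → ℝ, Continuous φ →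
      (∀ u, |φ u| ≤ 1) →
      Tendsto (fun n => sintegral (scalarComp (μn n) ψ) φ) atTop
        (𝓝 (sintegral (scalarComp μ ψ) φ)) := by
    intro ψ hψ φ hφc hφb
    have h := hconv (fun t => φ t • ψ) (hφc.smul continuous_const)
    rw [vpair_eq bH μ hφc hφb hψ] at h
    have he : (fun n => vpair bH (μn n) (fun t => φ t • ψ))
        = fun n => sintegral (scalarComp (μn n) ψ) φ := by
      funext n; exact vpair_eq bH (μn n) hφc hφb hψ
    rwa [he] at h
  have key : ∀ (ψ : H), ψ ∈ Submodule.span ℝ (Set.range ⇑bH) → ∀ x y : ℝ,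
      a ≤ x → x ≤ y → y ≤ b →
      |(inner ℝ (μ (Set.Icc x y)) ψ : ℝ)| ≤ ‖ψ‖ * (ω ((y - x).toNNReal) : ℝ) := by
    intro ψ hψ x y hax hxy hyb
    set sμ := scalarComp μ ψ with hsμ
    set c : ℝ := (ω ((y - x).toNNReal) : ℝ) with hcdef
    refine le_of_forall_pos_le_add fun ε hε => ?_
    have hG : Continuous (fun d : ℝ => ‖ψ‖ * (ω ((y - x + 2*d).toNNReal) : ℝ)) := by
      apply continuous_const.mul
      exact NNReal.continuous_coe.comp (hωc.comp (continuous_real_toNNReal.comp (by fun_prop)))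
    have htd := hG.tendsto 0
    have hG0 : ‖ψ‖ * (ω ((y - x + 2*(0:ℝ)).toNNReal) : ℝ) = ‖ψ‖ * c := by rw [mul_zero, add_zero]
    rw [hG0] at htd
    have hev : ∀ᶠ d : ℝ in 𝓝 0, ‖ψ‖ * (ω ((y - x + 2*d).toNNReal) : ℝ) < ‖ψ‖ * c + ε/2 :=
      htd.eventually_lt_const (by linarith)
    obtain ⟨δ₁, hδ₁pos, hδ₁⟩ := Metric.eventually_nhds_iff.1 hev
    obtain ⟨δ₂, hδ₂pos, hδ₂⟩ := small_err sμ.toJordanDecomposition.posPart x y hxy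
      (show (0:ℝ) < ε/4 by linarith)
    obtain ⟨δ₃, hδ₃pos, hδ₃⟩ := small_err sμ.toJordanDecomposition.negPart x y hxy
      (show (0:ℝ) < ε/4 by linarith)
    set δ : ℝ := min (δ₁/2) (min δ₂ δ₃) with hδdef
    have hδpos : 0 < δ := lt_min (by linarith) (lt_min hδ₂pos hδ₃pos)
    have hδle2 : δ ≤ δ₂ := le_trans (min_le_right _ _) (min_le_left _ _)
    have hδle3 : δ ≤ δ₃ := le_trans (min_le_right _ _) (min_le_right _ _)
    set φ := tent x y δ with hφdef
    set K := Set.Icc (x-δ) (y+δ) \ Set.Icc x y with hKdef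
    have hKm : MeasurableSet K := measurableSet_Icc.diff measurableSet_Icc
    have hposK : (sμ.toJordanDecomposition.posPart K).toReal < ε/4 :=
      lt_of_le_of_lt (ENNReal.toReal_mono (measure_ne_top _ _) (measure_mono
        (Set.diff_subset_diff_left (Set.Icc_subset_Icc (by linarith) (by linarith))))) hδ₂
    have hnegK : (sμ.toJordanDecomposition.negPart K).toReal < ε/4 :=
      lt_of_le_of_lt (ENNReal.toReal_mono (measure_ne_top _ _) (measure_mono
        (Set.diff_subset_diff_left (Set.Icc_subset_Icc (by linarith) (by linarith))))) hδ₃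
    have h1 : |sintegral sμ φ - sμ (Set.Icc x y)| ≤ ε/4 + ε/4 :=
      le_trans (sintegral_est sμ (tent_continuous x y δ) (tent_abs_le x y δ)
        measurableSet_Icc hKm (tent_ind_bound hδpos)) (by linarith)
    have h2 : ∀ n, |sintegral (scalarComp (μn n) ψ) φ|
        ≤ ‖ψ‖ * (ω ((y - x + 2*δ).toNNReal) : ℝ) := by
      intro n
      have he := sintegral_est (scalarComp (μn n) ψ) (tent_continuous x y δ)
        (tent_abs_le x y δ) MeasurableSet.empty measurableSet_Icc (tent_ind_bound0 hδpos)
      rw [(scalarComp (μn n) ψ).empty, sub_zero] at he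
      refine le_trans he ?_
      have hb := hTVn n ψ (x-δ) (y+δ) (Set.Icc (x-δ) (y+δ)) measurableSet_Icc subset_rfl
      have heq : y + δ - (x - δ) = y - x + 2*δ := by ring
      rwa [heq] at hb
    have h3 : |sintegral sμ φ| ≤ ‖ψ‖ * (ω ((y - x + 2*δ).toNNReal) : ℝ) :=
      le_of_tendsto (hlim ψ hψ φ (tent_continuous x y δ) (tent_abs_le x y δ)).abs
        (Eventually.of_forall h2)
    have h4 : ‖ψ‖ * (ω ((y - x + 2*δ).toNNReal) : ℝ) < ‖ψ‖ * c + ε/2 := by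
      apply hδ₁
      rw [Real.dist_eq, sub_zero, abs_of_pos hδpos]
      calc δ ≤ δ₁/2 := min_le_left _ _
        _ < δ₁ := by linarith
    have h5 : (inner ℝ (μ (Set.Icc x y)) ψ : ℝ) = sμ (Set.Icc x y) := by
      rw [hsμ, scalarComp_apply, real_inner_comm]
    rw [h5]
    calc |sμ (Set.Icc x y)|
        ≤ |sintegral sμ φ| + |sintegral sμ φ - sμ (Set.Icc x y)| := by
          have h7 := abs_sub (sintegral sμ φ) (sintegral sμ φ - sμ (Set.Icc x y))
          rwa [sub_sub_cancel] at h7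
      _ ≤ ‖ψ‖ * (ω ((y - x + 2*δ).toNNReal) : ℝ) + (ε/4 + ε/4) := add_le_add h3 h1
      _ ≤ ‖ψ‖ * c + ε := by linarith
  have key' : ∀ x y : ℝ, a ≤ x → x ≤ y → y ≤ b →
      ‖μ (Set.Icc x y)‖ ≤ (ω ((y - x).toNNReal) : ℝ) := by
    intro x y hax hxy hyb
    set v := μ (Set.Icc x y) with hv
    set c : ℝ := (ω ((y - x).toNNReal) : ℝ) with hc
    have hc0 : 0 ≤ c := (ω ((y - x).toNNReal)).2
    have hall : ∀ ψ : H, |(inner ℝ v ψ : ℝ)| ≤ ‖ψ‖ * c := by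
      intro ψ
      have hcl : IsClosed {ψ : H | |(inner ℝ v ψ : ℝ)| ≤ ‖ψ‖ * c} :=
        isClosed_le (innerSL ℝ v).continuous.abs (continuous_norm.mul continuous_const)
      have hsub : (Submodule.span ℝ (Set.range ⇑bH) : Set H) ⊆
          {ψ : H | |(inner ℝ v ψ : ℝ)| ≤ ‖ψ‖ * c} := fun ψ' hψ' => key ψ' hψ' x y hax hxy hyb
      have hmem : ψ ∈ closure (Submodule.span ℝ (Set.range ⇑bH) : Set H) := by
        have : ψ ∈ (Submodule.span ℝ (Set.range ⇑bH)).topologicalClosure := by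
          rw [bH.dense_span]; trivial
        exact this
      exact closure_minimal hsub hcl hmem
    have hvv := hall v
    rw [real_inner_self_eq_norm_mul_norm, abs_of_nonneg (mul_self_nonneg _)] at hvv
    rcases eq_or_lt_of_le (norm_nonneg v) with h0 | h0
    · rw [← h0]; exact hc0
    · exact le_of_mul_le_mul_left hvv h0
  have hatom : ∀ t : ℝ, μ {t} = 0 := by
    intro t
    by_cases ht : t ∈ Set.Icc a b
    · have h1 := key' t t ht.1 le_rfl ht.2
      rw [sub_self, Real.toNNReal_zero, hω0, Set.Icc_self] at h1
      have h2 : ‖μ {t}‖ ≤ 0 := by simpa using h1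
      exact norm_le_zero_iff.1 h2
    · refine hsuppμ {t} (measurableSet_singleton t) ?_
      apply Set.eq_empty_of_subset_empty
      rintro z ⟨hz1, hz2⟩
      rw [Set.mem_singleton_iff] at hz1
      subst hz1
      exact ht hz2
  have hatomn : ∀ n, ∀ t ∈ Set.Icc a b, μn n {t} = 0 := by
    intro n t ht
    have h1 : (‖μn n {t}‖₊ : ℝ≥0∞) ≤ tvar (μn n) (Set.Icc t t) :=
      nnnorm_le_tvar _ (measurableSet_singleton t) (by rw [Set.Icc_self])
    have h2 := hna n t ht t ht le_rfl
    rw [sub_self, Real.toNNReal_zero, hω0] at h2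
    have h3 := le_trans h1 h2
    have h4 : ‖μn n {t}‖₊ = 0 := by simpa using h3
    simpa using h4
  have hIco : ∀ x y : ℝ, a ≤ x → x ≤ y → y ≤ b →
      μ (Set.Ico a y) - μ (Set.Ico a x) = μ (Set.Icc x y) := by
    intro x y hax hxy hyb
    have h1 : μ (Set.Ico a y) = μ (Set.Ico a x) + μ (Set.Ico x y) := by
      rw [← Set.Ico_union_Ico_eq_Ico hax hxy]
      exact VectorMeasure.of_union (Set.Ico_disjoint_Ico_same)
        measurableSet_Ico measurableSet_Ico
    have h2 : μ (Set.Icc x y) = μ (Set.Ico x y) + μ {y} := by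
      rw [← Set.Ico_union_right hxy]
      exact VectorMeasure.of_union (by simp) measurableSet_Ico (measurableSet_singleton y)
    rw [h1, h2, hatom y, add_zero]
    abel
  have hIcon : ∀ n, ∀ x y : ℝ, a ≤ x → x ≤ y → y ≤ b →
      μn n (Set.Ico a y) - μn n (Set.Ico a x) = μn n (Set.Icc x y) := by
    intro n x y hax hxy hyb
    have h1 : μn n (Set.Ico a y) = μn n (Set.Ico a x) + μn n (Set.Ico x y) := by
      rw [← Set.Ico_union_Ico_eq_Ico hax hxy]
      exact VectorMeasure.of_union (Set.Ico_disjoint_Ico_same)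
        measurableSet_Ico measurableSet_Ico
    have h2 : μn n (Set.Icc x y) = μn n (Set.Ico x y) + μn n {y} := by
      rw [← Set.Ico_union_right hxy]
      exact VectorMeasure.of_union (by simp) measurableSet_Ico (measurableSet_singleton y)
    rw [h1, h2, hatomn n y ⟨le_trans hax hxy, hyb⟩, add_zero]
    abel
  have hnormn : ∀ n, ∀ x y : ℝ, a ≤ x → x ≤ y → y ≤ b →
      ‖μn n (Set.Icc x y)‖ ≤ (ω ((y - x).toNNReal) : ℝ) := by
    intro n x y hax hxy hyb
    have h1 : (‖μn n (Set.Icc x y)‖₊ : ℝ≥0∞) ≤ ((ω ((y - x).toNNReal) : ℝ≥0) : ℝ≥0∞) :=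
      le_trans (nnnorm_le_tvar _ measurableSet_Icc subset_rfl)
        (hna n x ⟨hax, le_trans hxy hyb⟩ y ⟨le_trans hax hxy, hyb⟩ hxy)
    exact_mod_cast h1
  have hpt : ∀ (ψ : H), ψ ∈ Submodule.span ℝ (Set.range ⇑bH) → ∀ t ∈ Set.Icc a b,
      Tendsto (fun n => (inner ℝ (μn n (Set.Ico a t)) ψ : ℝ)) atTop
        (𝓝 (inner ℝ (μ (Set.Ico a t)) ψ : ℝ)) := by
    intro ψ hψ t ht
    rw [Metric.tendsto_atTop]
    intro ε hε
    set sμ := scalarComp μ ψ with hsμdef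
    -- modulus smallness
    have hG : Continuous (fun d : ℝ => ‖ψ‖ * (ω d.toNNReal : ℝ)) :=
      continuous_const.mul (NNReal.continuous_coe.comp (hωc.comp continuous_real_toNNReal))
    have htd := hG.tendsto 0
    have hG0 : ‖ψ‖ * (ω (0:ℝ).toNNReal : ℝ) = 0 := by
      rw [Real.toNNReal_zero, hω0]; simp
    rw [hG0] at htd
    obtain ⟨δ₁, hδ₁pos, hδ₁⟩ := Metric.eventually_nhds_iff.1
      (htd.eventually_lt_const (show (0:ℝ) < ε/6 by linarith))
    have hat : a - 1 ≤ t := by linarith [ht.1]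
    obtain ⟨δ₂, hδ₂pos, hδ₂⟩ := small_err sμ.toJordanDecomposition.posPart (a-1) t hat
      (show (0:ℝ) < ε/6 by linarith)
    obtain ⟨δ₃, hδ₃pos, hδ₃⟩ := small_err sμ.toJordanDecomposition.negPart (a-1) t hat
      (show (0:ℝ) < ε/6 by linarith)
    set δ : ℝ := min (δ₁/2) (min δ₂ δ₃) with hδdef
    have hδpos : 0 < δ := lt_min (by linarith) (lt_min hδ₂pos hδ₃pos)
    have hδsmall : ‖ψ‖ * (ω δ.toNNReal : ℝ) < ε/6 := by
      apply hδ₁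
      rw [Real.dist_eq, sub_zero, abs_of_pos hδpos]
      calc δ ≤ δ₁/2 := min_le_left _ _
        _ < δ₁ := by linarith
    have hδle2 : δ ≤ δ₂ := le_trans (min_le_right _ _) (min_le_left _ _)
    have hδle3 : δ ≤ δ₃ := le_trans (min_le_right _ _) (min_le_right _ _)
    set φ := tent (a-1) t δ with hφdef
    set I : Set ℝ := Set.Icc (a-1) t with hIdef
    set K : Set ℝ := Set.Icc (a-1-δ) (t+δ) \ I with hKdef
    have hKm : MeasurableSet K := measurableSet_Icc.diff measurableSet_Icc
    -- value of signed measures on I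
    have hIeq : ∀ (ν : VectorMeasure ℝ H), ν (Set.Ico (a-1) a) = 0 → ν {t} = 0 →
        scalarComp ν ψ I = (inner ℝ (ν (Set.Ico a t)) ψ : ℝ) := by
      intro ν h0 h1
      have hdec : ν I = ν (Set.Ico (a-1) a) + ν (Set.Icc a t) := by
        rw [hIdef, ← Set.Ico_union_Icc_eq_Icc (by linarith : a - 1 ≤ a) ht.1]
        exact VectorMeasure.of_union
          (Set.disjoint_left.2 fun z hz1 hz2 => absurd hz2.1 (not_le.2 hz1.2))
          measurableSet_Ico measurableSet_Icc
      have hdec2 : ν (Set.Icc a t) = ν (Set.Ico a t) + ν {t} := by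
        rw [← Set.Ico_union_right ht.1]
        exact VectorMeasure.of_union (by simp) measurableSet_Ico (measurableSet_singleton t)
      rw [scalarComp_apply, hdec, hdec2, h0, h1, zero_add, add_zero, real_inner_comm]
    have hIcoab : Set.Ico (a-1) a ∩ Set.Icc a b = ∅ := by
      apply Set.eq_empty_of_subset_empty
      rintro z ⟨hz1, hz2⟩
      exact absurd hz2.1 (not_le.2 hz1.2)
    -- K is contained in two small intervals
    have hKsub : K ⊆ Set.Icc (a-1-δ) (a-1) ∪ Set.Icc t (t+δ) := by
      rintro z ⟨hz1, hz2⟩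
      rw [hIdef, Set.mem_Icc, not_and_or, not_le, not_le] at hz2
      rcases hz2 with h | h
      · exact Or.inl ⟨hz1.1, h.le⟩
      · exact Or.inr ⟨h.le, hz1.2⟩
    -- μn side error
    have h1n : ∀ n, |sintegral (scalarComp (μn n) ψ) φ
        - (inner ℝ (μn n (Set.Ico a t)) ψ : ℝ)| ≤ 2*(‖ψ‖ * (ω δ.toNNReal : ℝ)) := by
      intro n
      have hsI : scalarComp (μn n) ψ I = (inner ℝ (μn n (Set.Ico a t)) ψ : ℝ) :=
        hIeq (μn n) (hsupp n _ measurableSet_Ico hIcoab) (hatomn n t ht)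
      have he := sintegral_est (scalarComp (μn n) ψ) (tent_continuous (a-1) t δ)
        (tent_abs_le (a-1) t δ) measurableSet_Icc hKm (tent_ind_bound hδpos)
      rw [hsI] at he
      refine le_trans he ?_
      refine le_trans (TV_le_add _ hKsub) ?_
      have hb1 := hTVn n ψ (a-1-δ) (a-1) (Set.Icc (a-1-δ) (a-1)) measurableSet_Icc subset_rfl
      have hb2 := hTVn n ψ t (t+δ) (Set.Icc t (t+δ)) measurableSet_Icc subset_rfl
      have he1 : a - 1 - (a-1-δ) = δ := by ring
      have he2 : t + δ - t = δ := by ring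
      rw [he1] at hb1
      rw [he2] at hb2
      linarith
    -- μ side error
    have h1μ : |sintegral sμ φ - (inner ℝ (μ (Set.Ico a t)) ψ : ℝ)| ≤ ε/6 + ε/6 := by
      have hsI : sμ I = (inner ℝ (μ (Set.Ico a t)) ψ : ℝ) :=
        hIeq μ (hsuppμ _ measurableSet_Ico hIcoab) (hatom t)
      have he := sintegral_est sμ (tent_continuous (a-1) t δ)
        (tent_abs_le (a-1) t δ) measurableSet_Icc hKm (tent_ind_bound hδpos)
      rw [hsI] at he
      refine le_trans he ?_
      have hp1 : (sμ.toJordanDecomposition.posPart K).toReal ≤ ε/6 := by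
        refine le_trans (ENNReal.toReal_mono (measure_ne_top _ _) (measure_mono
          (Set.diff_subset_diff_left (Set.Icc_subset_Icc (by linarith) (by linarith))))) hδ₂.le
      have hp2 : (sμ.toJordanDecomposition.negPart K).toReal ≤ ε/6 := by
        refine le_trans (ENNReal.toReal_mono (measure_ne_top _ _) (measure_mono
          (Set.diff_subset_diff_left (Set.Icc_subset_Icc (by linarith) (by linarith))))) hδ₃.le
      linarith
    -- convergence of sintegrals
    have hconvφ := hlim ψ hψ φ (tent_continuous (a-1) t δ) (tent_abs_le (a-1) t δ)
    have hev := hconvφ.eventually (Metric.ball_mem_nhds _ (show (0:ℝ) < ε/6 by linarith))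
    rw [eventually_atTop] at hev
    obtain ⟨N, hN⟩ := hev
    refine ⟨N, fun n hn => ?_⟩
    have hd := hN n hn
    rw [Real.dist_eq] at hd
    rw [Real.dist_eq]
    have e1 : (inner ℝ (μn n (Set.Ico a t)) ψ : ℝ) - (inner ℝ (μ (Set.Ico a t)) ψ : ℝ)
        = -(sintegral (scalarComp (μn n) ψ) φ - (inner ℝ (μn n (Set.Ico a t)) ψ : ℝ))
          + (sintegral (scalarComp (μn n) ψ) φ - sintegral sμ φ)
          + (sintegral sμ φ - (inner ℝ (μ (Set.Ico a t)) ψ : ℝ)) := by ring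
    rw [e1]
    have ha1 := h1n n
    have ha2 := abs_add_le (-(sintegral (scalarComp (μn n) ψ) φ
        - (inner ℝ (μn n (Set.Ico a t)) ψ : ℝ))
          + (sintegral (scalarComp (μn n) ψ) φ - sintegral sμ φ))
      (sintegral sμ φ - (inner ℝ (μ (Set.Ico a t)) ψ : ℝ))
    have ha3 := abs_add_le (-(sintegral (scalarComp (μn n) ψ) φ
        - (inner ℝ (μn n (Set.Ico a t)) ψ : ℝ)))
      (sintegral (scalarComp (μn n) ψ) φ - sintegral sμ φ)
    rw [abs_neg] at ha3
    have := hδsmall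
    linarith
  have hus : ∀ (ψ : H), ψ ∈ Submodule.span ℝ (Set.range ⇑bH) →
      TendstoUniformlyOn (fun n t => (inner ℝ (μn n (Set.Ico a t)) ψ : ℝ))
        (fun t => (inner ℝ (μ (Set.Ico a t)) ψ : ℝ)) atTop (Set.Icc a b) := by
    intro ψ hψ
    rw [Metric.tendstoUniformlyOn_iff]
    intro ε hε
    have hG : Continuous (fun d : ℝ => ‖ψ‖ * (ω d.toNNReal : ℝ)) :=
      continuous_const.mul (NNReal.continuous_coe.comp (hωc.comp continuous_real_toNNReal))
    have htd := hG.tendsto 0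
    have hG0 : ‖ψ‖ * (ω (0:ℝ).toNNReal : ℝ) = 0 := by rw [Real.toNNReal_zero, hω0]; simp
    rw [hG0] at htd
    obtain ⟨δ₁, hδ₁pos, hδ₁⟩ := Metric.eventually_nhds_iff.1
      (htd.eventually_lt_const (show (0:ℝ) < ε/4 by linarith))
    set δ : ℝ := δ₁/2 with hδdef
    have hδpos : 0 < δ := by rw [hδdef]; linarith
    have hδbd : ∀ d : ℝ, 0 ≤ d → d ≤ δ → ‖ψ‖ * (ω d.toNNReal : ℝ) < ε/4 := by
      intro d hd0 hdδ
      apply hδ₁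
      rw [Real.dist_eq, sub_zero, abs_of_nonneg hd0]
      rw [hδdef] at hdδ
      linarith
    set N : ℕ := ⌈(b - a)/δ⌉₊ with hNdef
    have hNpos : (0:ℝ) < (N:ℝ) + 1 := by positivity
    set h : ℝ := (b - a)/((N:ℝ) + 1) with hhdef
    have hhge : 0 ≤ h := div_nonneg (by linarith) hNpos.le
    have hhle : h ≤ δ := by
      rw [hhdef, div_le_iff₀ hNpos]
      have h1 : (b - a)/δ ≤ ⌈(b - a)/δ⌉₊ := Nat.le_ceil _
      rw [div_le_iff₀ hδpos] at h1
      have h2 : ((⌈(b - a)/δ⌉₊ : ℝ)) = (N:ℝ) := by rw [hNdef]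
      nlinarith [hδpos]
    have hNh : ((N:ℝ) + 1) * h = b - a := by
      rw [hhdef]; field_simp
    set g : ℕ → ℝ := fun i => a + i * h with hgdef
    have hgmem : ∀ i : ℕ, i ≤ N + 1 → g i ∈ Set.Icc a b := by
      intro i hi
      have h1 : 0 ≤ (i:ℝ) * h := mul_nonneg (Nat.cast_nonneg i) hhge
      have h2 : (i:ℝ) * h ≤ ((N:ℝ) + 1) * h :=
        mul_le_mul_of_nonneg_right (by exact_mod_cast hi) hhge
      exact ⟨by simp only [hgdef]; linarith, by simp only [hgdef]; linarith⟩
    have hev2 : ∀ᶠ n in atTop, ∀ i ∈ Finset.range (N + 2),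
        dist ((inner ℝ (μ (Set.Ico a (g i))) ψ : ℝ))
          ((inner ℝ (μn n (Set.Ico a (g i))) ψ : ℝ)) < ε/4 := by
      rw [eventually_all_finset]
      intro i hi
      rw [Finset.mem_range] at hi
      have hp := hpt ψ hψ (g i) (hgmem i (by omega))
      filter_upwards [hp.eventually (Metric.ball_mem_nhds _
        (show (0:ℝ) < ε/4 by linarith))] with n hn
      rw [dist_comm]
      exact hn
    filter_upwards [hev2] with n hn x hx
    rcases eq_or_lt_of_le hhge with hh0 | hh0
    · have hba : b - a = 0 := by
        have h5 : (b - a)/((N:ℝ)+1) = 0 := by rw [← hhdef, ← hh0]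
        rcases div_eq_zero_iff.1 h5 with h6 | h6
        · exact h6
        · exact absurd h6 (by positivity)
      have hxa : x = a := le_antisymm (by linarith [hx.2]) hx.1
      have h0 := hn 0 (Finset.mem_range.2 (by omega))
      have hg0 : g 0 = a := by simp [hgdef]
      rw [hg0] at h0
      rw [hxa]
      exact lt_trans h0 (by linarith)
    · set i : ℕ := ⌊(x - a)/h⌋₊ with hidef
      have hdiv_le : (x - a)/h ≤ (N:ℝ) + 1 := by
        rw [div_le_iff₀ hh0]
        linarith [hx.2, hNh]
      have hiN : i ≤ N + 1 := by
        have h3 : ((x - a)/h) ≤ ((N + 1 : ℕ) : ℝ) := by push_cast; exact hdiv_le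
        have h4 := Nat.floor_le_floor h3
        rwa [Nat.floor_natCast] at h4
      have hgle : g i ≤ x := by
        have h1 : (i:ℝ) ≤ (x - a)/h := Nat.floor_le (div_nonneg (by linarith [hx.1]) hh0.le)
        rw [le_div_iff₀ hh0] at h1
        simp only [hgdef]; linarith
      have hlt : x - g i ≤ h := by
        have h2 : (x - a)/h < (i:ℝ) + 1 := Nat.lt_floor_add_one _
        rw [div_lt_iff₀ hh0] at h2
        simp only [hgdef]; nlinarith
      have hgm : g i ∈ Set.Icc a b := hgmem i hiN
      have hd3 := hn i (Finset.mem_range.2 (by omega))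
      have hdF : |(inner ℝ (μ (Set.Ico a x)) ψ : ℝ)
          - (inner ℝ (μ (Set.Ico a (g i))) ψ : ℝ)| < ε/4 := by
        rw [← inner_sub_left, hIco (g i) x hgm.1 hgle hx.2]
        refine lt_of_le_of_lt (abs_real_inner_le_norm _ _) ?_
        have hb1 := key' (g i) x hgm.1 hgle hx.2
        have hsm := hδbd (x - g i) (by linarith) (le_trans hlt hhle)
        calc ‖μ (Set.Icc (g i) x)‖ * ‖ψ‖ ≤ (ω ((x - g i).toNNReal) : ℝ) * ‖ψ‖ :=
              mul_le_mul_of_nonneg_right hb1 (norm_nonneg ψ)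
          _ = ‖ψ‖ * (ω ((x - g i).toNNReal) : ℝ) := by ring
          _ < ε/4 := hsm
      have hdFn : |(inner ℝ (μn n (Set.Ico a x)) ψ : ℝ)
          - (inner ℝ (μn n (Set.Ico a (g i))) ψ : ℝ)| < ε/4 := by
        rw [← inner_sub_left, hIcon n (g i) x hgm.1 hgle hx.2]
        refine lt_of_le_of_lt (abs_real_inner_le_norm _ _) ?_
        have hb1 := hnormn n (g i) x hgm.1 hgle hx.2
        have hsm := hδbd (x - g i) (by linarith) (le_trans hlt hhle)
        calc ‖μn n (Set.Icc (g i) x)‖ * ‖ψ‖ ≤ (ω ((x - g i).toNNReal) : ℝ) * ‖ψ‖ :=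
              mul_le_mul_of_nonneg_right hb1 (norm_nonneg ψ)
          _ = ‖ψ‖ * (ω ((x - g i).toNNReal) : ℝ) := by ring
          _ < ε/4 := hsm
      rw [Real.dist_eq] at hd3 ⊢
      have e1 : (inner ℝ (μ (Set.Ico a x)) ψ : ℝ) - (inner ℝ (μn n (Set.Ico a x)) ψ : ℝ)
          = ((inner ℝ (μ (Set.Ico a x)) ψ : ℝ) - (inner ℝ (μ (Set.Ico a (g i))) ψ : ℝ))
            + ((inner ℝ (μ (Set.Ico a (g i))) ψ : ℝ)
                - (inner ℝ (μn n (Set.Ico a (g i))) ψ : ℝ))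
            + ((inner ℝ (μn n (Set.Ico a (g i))) ψ : ℝ)
                - (inner ℝ (μn n (Set.Ico a x)) ψ : ℝ)) := by ring
      rw [e1]
      have ha2 := abs_add_le (((inner ℝ (μ (Set.Ico a x)) ψ : ℝ)
            - (inner ℝ (μ (Set.Ico a (g i))) ψ : ℝ))
          + ((inner ℝ (μ (Set.Ico a (g i))) ψ : ℝ)
            - (inner ℝ (μn n (Set.Ico a (g i))) ψ : ℝ)))
        ((inner ℝ (μn n (Set.Ico a (g i))) ψ : ℝ) - (inner ℝ (μn n (Set.Ico a x)) ψ : ℝ))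
      have ha3 := abs_add_le ((inner ℝ (μ (Set.Ico a x)) ψ : ℝ)
          - (inner ℝ (μ (Set.Ico a (g i))) ψ : ℝ))
        ((inner ℝ (μ (Set.Ico a (g i))) ψ : ℝ) - (inner ℝ (μn n (Set.Ico a (g i))) ψ : ℝ))
      have ha4 : |(inner ℝ (μn n (Set.Ico a (g i))) ψ : ℝ)
          - (inner ℝ (μn n (Set.Ico a x)) ψ : ℝ)| < ε/4 := by
        rw [abs_sub_comm]; exact hdFn
      linarith
  refine ⟨hatom, ?_, ?_⟩
  · intro x hx y hy hxy
    rw [hIco x y hx.1 hxy hy.2]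
    have h1 := key' x y hx.1 hxy hy.2
    rw [← NNReal.coe_le_coe]
    exact_mod_cast h1
  · intro ψ
    rw [Metric.tendstoUniformlyOn_iff]
    intro ε hε
    set M : ℝ := (ω ((b - a).toNNReal) : ℝ) with hM
    have hM0 : 0 ≤ M := (ω ((b - a).toNNReal)).2
    have hMn : ∀ n, ∀ t ∈ Set.Icc a b, ‖μn n (Set.Ico a t)‖ ≤ M := by
      intro n t ht
      have h1 : (‖μn n (Set.Ico a t)‖₊ : ℝ≥0∞) ≤ tvar (μn n) (Set.Icc a b) :=
        nnnorm_le_tvar _ measurableSet_Ico (fun z hz => ⟨hz.1, le_trans hz.2.le ht.2⟩)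
      have h2 := hna n a ⟨le_rfl, hab⟩ b ⟨hab, le_rfl⟩ hab
      have h3 := le_trans h1 h2
      exact_mod_cast h3
    have hMμ : ∀ t ∈ Set.Icc a b, ‖μ (Set.Ico a t)‖ ≤ M := by
      intro t ht
      have e : μ (Set.Ico a t) = μ (Set.Icc a t) := by
        have h2 : μ (Set.Icc a t) = μ (Set.Ico a t) + μ {t} := by
          rw [← Set.Ico_union_right ht.1]
          exact VectorMeasure.of_union (by simp) measurableSet_Ico (measurableSet_singleton t)
        rw [h2, hatom t, add_zero]
      rw [e]
      refine le_trans (key' a t le_rfl ht.1 ht.2) ?_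
      exact_mod_cast hωm (Real.toNNReal_le_toNNReal (by linarith [ht.2]))
    have hmemcl : ψ ∈ closure (Submodule.span ℝ (Set.range ⇑bH) : Set H) := by
      have h : ψ ∈ (Submodule.span ℝ (Set.range ⇑bH)).topologicalClosure := by
        rw [bH.dense_span]; trivial
      exact h
    obtain ⟨ψ', hψ'S, hψ'd⟩ := Metric.mem_closure_iff.1 hmemcl (ε/(4*(M+1)))
      (by positivity)
    have h4 := hus ψ' hψ'S
    rw [Metric.tendstoUniformlyOn_iff] at h4
    filter_upwards [h4 (ε/2) (by positivity)] with n hn t ht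
    have hbd : ∀ v : H, ‖v‖ ≤ M → |(inner ℝ v ψ : ℝ) - (inner ℝ v ψ' : ℝ)| ≤ ε/4 := by
      intro v hv
      rw [← inner_sub_right]
      refine le_trans (abs_real_inner_le_norm v (ψ - ψ')) ?_
      have hdist : ‖ψ - ψ'‖ < ε/(4*(M+1)) := by
        rw [← dist_eq_norm]; exact hψ'd
      have h6 : ‖v‖ * ‖ψ - ψ'‖ ≤ M * (ε/(4*(M+1))) :=
        mul_le_mul hv hdist.le (norm_nonneg _) hM0
      refine le_trans h6 ?_
      have h7 : M * (ε/(4*(M+1))) = (M * ε)/(4*(M+1)) := by ring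
      rw [h7, div_le_div_iff₀ (by positivity) (by norm_num : (0:ℝ) < 4)]
      nlinarith
    have hmid := hn t ht
    rw [Real.dist_eq] at hmid ⊢
    have e1 : (inner ℝ (μ (Set.Ico a t)) ψ : ℝ) - (inner ℝ (μn n (Set.Ico a t)) ψ : ℝ)
        = ((inner ℝ (μ (Set.Ico a t)) ψ : ℝ) - (inner ℝ (μ (Set.Ico a t)) ψ' : ℝ))
          + ((inner ℝ (μ (Set.Ico a t)) ψ' : ℝ) - (inner ℝ (μn n (Set.Ico a t)) ψ' : ℝ))
          + ((inner ℝ (μn n (Set.Ico a t)) ψ' : ℝ) - (inner ℝ (μn n (Set.Ico a t)) ψ : ℝ)) := by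
      ring
    rw [e1]
    have hA := hbd _ (hMμ t ht)
    have hB := hbd _ (hMn n t ht)
    have hB' : |(inner ℝ (μn n (Set.Ico a t)) ψ' : ℝ) - (inner ℝ (μn n (Set.Ico a t)) ψ : ℝ)|
        ≤ ε/4 := by rw [abs_sub_comm]; exact hB
    calc |_ + _ + _| ≤ |_ + _| + |(inner ℝ (μn n (Set.Ico a t)) ψ' : ℝ)
            - (inner ℝ (μn n (Set.Ico a t)) ψ : ℝ)| := abs_add_le _ _
      _ ≤ |(inner ℝ (μ (Set.Ico a t)) ψ : ℝ) - (inner ℝ (μ (Set.Ico a t)) ψ' : ℝ)|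
            + |(inner ℝ (μ (Set.Ico a t)) ψ' : ℝ) - (inner ℝ (μn n (Set.Ico a t)) ψ' : ℝ)|
            + |(inner ℝ (μn n (Set.Ico a t)) ψ' : ℝ) - (inner ℝ (μn n (Set.Ico a t)) ψ : ℝ)| := by
          gcongr
          exact abs_add_le _ _
      _ < ε := by linarith
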